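/- With the group G acting on Γ_4^3 generated by the involutions π_α as above: fix l ∈ [4], let H_l be the subgroup generated by π_{(il)} for i ∈ [4]\{l}, and let i,j,k be the three elements of [4]\{l}. Let Γ_4^3(ijk) be the set of all γ ∈ Γ_4^3 such that o_γ({i,j,k}) = (ijk). Then Γ_4^3(ijk) has exactly 4 elements and is a single orbit of H_l. -/

import Mathlib

set_option maxRecDepth 10000

open Equiv Equiv.Perm

/- We model `Γ₄³`, the cyclic orderings `(i j k)` of 3-element subsets of `[4]`, as the
3-cycles in the permutation group of `Fin 4`: `(i j k)` is the 3-cycle `i ↦ j ↦ k ↦ i`.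
Reversal `-(i j k) = (k j i)` corresponds to inversion. -/

/-- The 3-cycle `i ↦ j ↦ k ↦ i` (for distinct `i j k`). -/
def c3 (i j k : Fin 4) : Equiv.Perm (Fin 4) := Equiv.swap i j * Equiv.swap j k

/-- The fourth element of `Fin 4` besides the distinct elements `a b c`
(using `0+1+2+3 = 2` in `Fin 4`). -/
def fourth (a b c : Fin 4) : Fin 4 := 2 - a - b - c

/-- The map `π_{(ab)} : Γ₄³ → Γ₄³`, determined by `π_{(ij)}(ijk) = (jil)` and
`π_{(kl)}(ijk) = (ijl)` for `{i,j,k,l} = [4]`. If both `a,b` lie in the support of the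
3-cycle `γ`, reverse them and swap the third element for the fourth; otherwise exchange
the roles of `a` and `b` (conjugation by `swap a b`). -/
def piAct (a b : Fin 4) : Function.End (Equiv.Perm (Fin 4)) := fun γ =>
  if γ a ≠ a ∧ γ b ≠ b then
    (if γ a = b then c3 b a (fourth a b (γ b)) else c3 a b (fourth a b (γ a)))
  else Equiv.swap a b * γ * Equiv.swap a b

/-- `o_γ(S)`, for `S = {i,j,k}`: the cyclic orientation induced by `γ` on `{i,j,k}`;
it is `γ` itself if `{i,j,k}` is the support of `γ`, and otherwise is obtained from `γ` by
exchanging the element of the support outside `S` with the element of `S` outside the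
support (conjugation by the corresponding transposition). -/
def oFun (γ : Equiv.Perm (Fin 4)) (i j k : Fin 4) : Equiv.Perm (Fin 4) :=
  if γ i = i then Equiv.swap i (fourth i j k) * γ * Equiv.swap i (fourth i j k)
  else if γ j = j then Equiv.swap j (fourth i j k) * γ * Equiv.swap j (fourth i j k)
  else if γ k = k then Equiv.swap k (fourth i j k) * γ * Equiv.swap k (fourth i j k)
  else γ

/-- The generators `π_α` for all 2-element subsets `α ⊆ [4]`. -/
def piGens : Set (Function.End (Equiv.Perm (Fin 4))) :=
  {f | ∃ a b : Fin 4, a ≠ b ∧ f = piAct a b}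

/-- A decidable surrogate for membership in `Γ₄³(ijk)`. -/
def P (γ : Perm (Fin 4)) (i j k : Fin 4) : Prop :=
  (γ ^ 3 = 1 ∧ γ ≠ 1) ∧ oFun γ i j k = c3 i j k

instance (γ : Perm (Fin 4)) (i j k : Fin 4) : Decidable (P γ i j k) := by
  unfold P; infer_instance

/-- In `Perm (Fin 4)`, three-cycles are exactly the nontrivial elements of order dividing 3. -/
lemma three_iff (γ : Perm (Fin 4)) : γ.IsThreeCycle ↔ (γ ^ 3 = 1 ∧ γ ≠ 1) := by
  constructor
  · intro h
    have ho := h.orderOf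
    refine ⟨by rw [← ho]; exact pow_orderOf_eq_one γ, ?_⟩
    intro h1
    rw [h1] at ho; simp at ho
  · rintro ⟨h3, h1⟩
    have ho : orderOf γ = 3 := by
      have hd := orderOf_dvd_of_pow_eq_one h3
      rcases (Nat.prime_three.eq_one_or_self_of_dvd _ hd) with h | h
      · exact absurd (orderOf_eq_one_iff.mp h) h1
      · exact h
    have hlcm : γ.cycleType.lcm = 3 := by rw [Equiv.Perm.lcm_cycleType, ho]
    have hmem : ∀ n ∈ γ.cycleType, n = 3 := by
      intro n hn
      have hd : n ∣ 3 := hlcm ▸ Multiset.dvd_lcm hn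
      have h2 := Equiv.Perm.two_le_of_mem_cycleType hn
      rcases (Nat.prime_three.eq_one_or_self_of_dvd _ hd) with h | h
      · omega
      · exact h
    have hrep := Multiset.eq_replicate_of_mem hmem
    have hsum : γ.cycleType.sum ≤ 4 := by
      rw [Equiv.Perm.sum_cycleType]
      simpa using γ.support.card_le_univ
    have hc0 : γ.cycleType ≠ 0 := by
      simpa [Equiv.Perm.cycleType_eq_zero] using h1
    have hcard : Multiset.card γ.cycleType = 1 := by
      have hs : Multiset.card γ.cycleType * 3 ≤ 4 := by
        rw [hrep] at hsum
        simpa [Multiset.sum_replicate, smul_eq_mul, Nat.mul_comm] using hsum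
      have hne : Multiset.card γ.cycleType ≠ 0 := fun h => hc0 (Multiset.card_eq_zero.mp h)
      omega
    unfold Equiv.Perm.IsThreeCycle
    rw [hrep, hcard]
    rfl

lemma key_card : ∀ l i j k : Fin 4, i≠j → j≠k → i≠k → i≠l → j≠l → k≠l →
    (Finset.univ.filter (fun γ => P γ i j k)).card = 4 := by decide

lemma key_inv : ∀ l i j k : Fin 4, i≠j → j≠k → i≠k → i≠l → j≠l → k≠l →
    ∀ a : Fin 4, a ≠ l → ∀ γ : Perm (Fin 4), P γ i j k → P (piAct a l γ) i j k := by
  letI : ∀ (γ : Perm (Fin 4)) (a l i j k : Fin 4), Decidable (P (piAct a l γ) i j k) :=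
    fun _ _ _ _ _ _ => inferInstance
  decide

lemma key_trans : ∀ l i j k : Fin 4, i≠j → j≠k → i≠k → i≠l → j≠l → k≠l →
    ∀ γ δ : Perm (Fin 4), P γ i j k → P δ i j k →
      γ = δ ∨ piAct i l γ = δ ∨ piAct j l γ = δ ∨ piAct k l γ = δ ∨
      piAct i l (piAct j l γ) = δ ∨ piAct j l (piAct k l γ) = δ ∨
      piAct i l (piAct k l γ) = δ := by decide

/-- For `l ∈ [4]` and `{i,j,k} = [4] \ {l}`: the set `Γ₄³(ijk)` of all `γ` with
`o_γ({i,j,k}) = (ijk)` has exactly 4 elements and is a single orbit of the subgroup `H_l`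
generated by the `π_{(il)}`, `i ≠ l`. -/
theorem orbit_of_Hl (l i j k : Fin 4)
    (hij : i ≠ j) (hjk : j ≠ k) (hik : i ≠ k)
    (hil : i ≠ l) (hjl : j ≠ l) (hkl : k ≠ l) :
    let Hl := Submonoid.closure {f : Function.End (Equiv.Perm (Fin 4)) |
      ∃ a : Fin 4, a ≠ l ∧ f = piAct a l}
    let Γijk : Set (Equiv.Perm (Fin 4)) :=
      {γ | γ.IsThreeCycle ∧ oFun γ i j k = c3 i j k}
    Γijk.ncard = 4 ∧
    (∀ γ ∈ Γijk, ∀ g ∈ Hl, g γ ∈ Γijk) ∧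
    (∀ γ ∈ Γijk, ∀ δ ∈ Γijk, ∃ g ∈ Hl, g γ = δ) := by
  intro Hl Γijk
  have hset : ∀ γ, γ ∈ Γijk ↔ P γ i j k := fun γ =>
    ⟨fun ⟨h1, h2⟩ => ⟨(three_iff γ).mp h1, h2⟩, fun ⟨h1, h2⟩ => ⟨(three_iff γ).mpr h1, h2⟩⟩
  refine ⟨?_, ?_, ?_⟩
  · have hΓ : Γijk = ↑(Finset.univ.filter (fun γ => P γ i j k)) := by
      ext γ; simp [hset γ]
    rw [hΓ, Set.ncard_coe_finset, key_card l i j k hij hjk hik hil hjl hkl]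
  · have H : ∀ g ∈ Hl, ∀ γ ∈ Γijk, g γ ∈ Γijk := by
      intro g hg
      induction hg using Submonoid.closure_induction with
      | mem f hf =>
        intro γ hγ
        obtain ⟨a, ha, rfl⟩ := hf
        exact (hset _).mpr (key_inv l i j k hij hjk hik hil hjl hkl a ha γ ((hset γ).mp hγ))
      | one => intro γ hγ; exact hγ
      | mul f g' hf hg' ihf ihg' => intro γ hγ; exact ihf _ (ihg' _ hγ)
    exact fun γ hγ g hg => H g hg γ hγ
  · intro γ hγ δ hδ
    have hmem : ∀ a : Fin 4, a ≠ l → piAct a l ∈ Hl := fun a ha =>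
      Submonoid.subset_closure ⟨a, ha, rfl⟩
    rcases key_trans l i j k hij hjk hik hil hjl hkl γ δ ((hset γ).mp hγ) ((hset δ).mp hδ)
      with h | h | h | h | h | h | h
    · exact ⟨1, one_mem _, h⟩
    · exact ⟨piAct i l, hmem i hil, h⟩
    · exact ⟨piAct j l, hmem j hjl, h⟩
    · exact ⟨piAct k l, hmem k hkl, h⟩
    · exact ⟨piAct i l * piAct j l, mul_mem (hmem i hil) (hmem j hjl), h⟩
    · exact ⟨piAct j l * piAct k l, mul_mem (hmem j hjl) (hmem k hkl), h⟩
    · exact ⟨piAct i l * piAct k l, mul_mem (hmem i hil) (hmem k hkl), h⟩
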